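/- Let Σ be a base of Δ, let Δ₀ ⊆ Δ, and let α ∈ Σ satisfy α ∉ Δ₀ and −α ∉ Δ₀. Suppose Σ' is a base of Δ with Δ ∩ ℕΣ' = ((Δ ∩ ℕΣ) \ {α}) ∪ {−α}, and suppose Π and Π' are bases of Δ₀ satisfying Δ₀ ∩ ℕΠ = Δ₀ ∩ ℕΣ and Δ₀ ∩ ℕΠ' = Δ₀ ∩ ℕΣ'. Then Π = Π'. (Reflecting a base in a root not lying in Δ₀ does not change the base of Δ₀ it determines; in particular, singular reflections preserve the principal roots.) -/

import Mathlib

open Pointwise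

/-- `NComb S` is the set of all finite linear combinations of elements of `S`
with non-negative integer coefficients, i.e. the additive submonoid generated by `S`. -/
def NComb {V : Type*} [AddCommMonoid V] (S : Set V) : Set V :=
  (AddSubmonoid.closure S : Set V)

/-- `B` is a base of `Δ`: `B ⊆ Δ`, `B` is linearly independent over `ℝ`, and
`Δ ⊆ ℕB ∪ (−ℕB)`. -/
def IsBase {V : Type*} [AddCommGroup V] [Module ℝ V] (Δ B : Set V) : Prop :=
  B ⊆ Δ ∧ LinearIndependent ℝ (fun x : B => (x : V)) ∧
    Δ ⊆ NComb B ∪ (-NComb B)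

section Aux

variable {V : Type*} [AddCommGroup V] [Module ℝ V]

omit [Module ℝ V] in
lemma mem_NComb_iff {S : Set V} {x : V} :
    x ∈ NComb S ↔ ∃ c : V →₀ ℕ, ↑c.support ⊆ S ∧ (c.sum fun i n => n • i) = x := by
  have h : x ∈ NComb S ↔ x ∈ Submodule.span ℕ S := by
    rw [NComb, ← Submodule.span_nat_eq_addSubmonoidClosure]
    rfl
  rw [h, Submodule.mem_span_set]

lemma rep_unique {S : Set V} (hS : LinearIndependent ℝ (fun x : S => (x : V)))
    {c d : V →₀ ℕ} (hc : ↑c.support ⊆ S) (hd : ↑d.support ⊆ S)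
    (h : (c.sum fun i n => n • i) = d.sum fun i n => n • i) : c = d := by
  classical
  set cR : V →₀ ℝ := c.mapRange (Nat.cast) Nat.cast_zero with hcR
  set dR : V →₀ ℝ := d.mapRange (Nat.cast) Nat.cast_zero with hdR
  have hsum : ∀ e : V →₀ ℕ, Finsupp.linearCombination ℝ id (e.mapRange (Nat.cast) Nat.cast_zero)
      = e.sum fun i n => n • i := by
    intro e
    rw [Finsupp.linearCombination_apply, Finsupp.sum_mapRange_index (by simp)]
    exact Finsupp.sum_congr fun i _ => by
      simp [Nat.cast_smul_eq_nsmul]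
  have hmem : cR - dR ∈ Finsupp.supported ℝ ℝ S := by
    intro y hy
    have : y ∈ cR.support ∪ dR.support := Finsupp.support_sub (f := cR) (g := dR) hy
    rcases Finset.mem_union.mp this with h1 | h1
    · exact hc (by simpa [hcR, Finsupp.support_mapRange_of_injective _ _ Nat.cast_injective]
        using h1)
    · exact hd (by simpa [hdR, Finsupp.support_mapRange_of_injective _ _ Nat.cast_injective]
        using h1)
  have hzero : Finsupp.linearCombination ℝ id (cR - dR) = 0 := by
    rw [map_sub, hsum, hsum, h, sub_self]
  have h2 := (linearIndepOn_iff (v := id)).mp hS (cR - dR) hmem hzero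
  have hRd : cR = dR := sub_eq_zero.mp h2
  exact Finsupp.mapRange_injective _ Nat.cast_zero Nat.cast_injective hRd

/-- A nontrivial nonnegative combination of a linearly independent set is nonzero. -/
lemma sum_ne_zero {S : Set V} (hS : LinearIndependent ℝ (fun x : S => (x : V)))
    {c : V →₀ ℕ} (hc : ↑c.support ⊆ S) (hne : c ≠ 0) :
    (c.sum fun i n => n • i) ≠ 0 := by
  intro h
  apply hne
  apply rep_unique hS hc (by simp)
  rw [h, Finsupp.sum_zero_index]

/-- characterization of the base as the indecomposable elements of its closure -/
lemma base_eq_indec {S : Set V} (hS : LinearIndependent ℝ (fun x : S => (x : V)))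
    (h0 : (0 : V) ∉ S) :
    S = {x | x ∈ AddSubmonoid.closure S ∧ x ≠ 0 ∧
      ∀ a b : V, a ∈ AddSubmonoid.closure S → b ∈ AddSubmonoid.closure S →
        a ≠ 0 → b ≠ 0 → x ≠ a + b} := by
  classical
  ext x
  constructor
  · intro hx
    refine ⟨AddSubmonoid.subset_closure hx, fun h => h0 (h ▸ hx), ?_⟩
    rintro a b ha hb ha0 hb0 rfl
    obtain ⟨ca, hca, hsa⟩ := mem_NComb_iff.mp ha
    obtain ⟨cb, hcb, hsb⟩ := mem_NComb_iff.mp hb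
    have hsupp : ↑(ca + cb).support ⊆ S := by
      intro y hy
      rcases Finset.mem_union.mp (Finsupp.support_add hy) with h1 | h1
      · exact hca h1
      · exact hcb h1
    have hsingle : ↑(Finsupp.single (a + b) 1 : V →₀ ℕ).support ⊆ S := by
      intro y hy
      have := Finsupp.support_single_subset hy
      simp only [Finset.mem_singleton] at this
      subst this; exact hx
    have heq : ((ca + cb).sum fun i n => n • i) =
        (Finsupp.single (a + b) 1 : V →₀ ℕ).sum fun i n => n • i := by
      rw [Finsupp.sum_add_index' (fun i => by simp) (fun i m n => add_nsmul i m n),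
        hsa, hsb, Finsupp.sum_single_index (by simp), one_nsmul]
    have hcd := rep_unique hS hsupp hsingle heq
    -- coefficients
    have hxy : ∀ y, ca y + cb y = (Finsupp.single (a + b) 1 : V →₀ ℕ) y := by
      intro y; rw [← Finsupp.add_apply, hcd]
    rcases Nat.eq_zero_or_pos (ca (a + b)) with hz | hpos
    · have : ca = 0 := by
        ext y
        by_cases hy : y = a + b
        · simp [hy, hz]
        · have := hxy y; simp [Finsupp.single_apply, Ne.symm hy, hy] at this
          show ca y = 0
          omega
      exact ha0 (by rw [← hsa, this, Finsupp.sum_zero_index])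
    · have : cb = 0 := by
        ext y
        by_cases hy : y = a + b
        · have := hxy y
          simp [Finsupp.single_apply, hy] at this ⊢
          omega
        · have := hxy y; simp [Finsupp.single_apply, Ne.symm hy, hy] at this
          show cb y = 0
          omega
      exact hb0 (by rw [← hsb, this, Finsupp.sum_zero_index])
  · rintro ⟨hcl, hx0, hind⟩
    obtain ⟨c, hc, hs⟩ := mem_NComb_iff.mp hcl
    have hcne : c ≠ 0 := by rintro rfl; rw [Finsupp.sum_zero_index] at hs; exact hx0 hs.symm
    obtain ⟨i, hi⟩ := Finsupp.ne_iff.mp hcne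
    simp only [Finsupp.coe_zero, Pi.zero_apply] at hi
    have hiS : i ∈ S := hc (Finsupp.mem_support_iff.mpr hi)
    have hile : Finsupp.single i 1 ≤ c := by
      rw [Finsupp.single_le_iff]; omega
    set d : V →₀ ℕ := c - Finsupp.single i 1 with hdd
    have hd : ↑d.support ⊆ S := by
      intro y hy
      apply hc
      simp only [Finset.mem_coe, Finsupp.mem_support_iff] at hy ⊢
      intro hcy
      apply hy
      simp [hdd, Finsupp.tsub_apply, hcy]
    have hcdec : c = Finsupp.single i 1 + d := (add_tsub_cancel_of_le hile).symm
    by_cases hd0 : d = 0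
    · -- then x = i ∈ S
      have : x = i := by
        rw [← hs, hcdec, hd0, add_zero, Finsupp.sum_single_index (by simp), one_nsmul]
      rw [this]; exact hiS
    · exfalso
      apply hind i (d.sum fun i n => n • i) (AddSubmonoid.subset_closure hiS)
        (mem_NComb_iff.mpr ⟨d, hd, rfl⟩) (fun h => h0 (h ▸ hiS)) (sum_ne_zero hS hd hd0)
      rw [← hs, hcdec, Finsupp.sum_add_index' (fun i => by simp) (fun i m n => add_nsmul i m n),
        Finsupp.sum_single_index (by simp), one_nsmul]

lemma base_eq_of_closure_eq {S T : Set V}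
    (hS : LinearIndependent ℝ (fun x : S => (x : V)))
    (hT : LinearIndependent ℝ (fun x : T => (x : V)))
    (h0S : (0 : V) ∉ S) (h0T : (0 : V) ∉ T)
    (h : AddSubmonoid.closure S = AddSubmonoid.closure T) : S = T := by
  rw [base_eq_indec hS h0S, base_eq_indec hT h0T, h]

end Aux


/-- Reflecting a base in a simple root `α` with `±α ∉ Δ₀` does not change the base of
`Δ₀` determined by the induced positive system. -/
theorem statement8 {V : Type*} [AddCommGroup V] [Module ℝ V]
    (Δ Δ₀ B B' P P' : Set V) (hfin : Δ.Finite) (h0 : (0 : V) ∉ Δ) (hsub : Δ₀ ⊆ Δ)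
    (hB : IsBase Δ B) (α : V) (hα : α ∈ B) (hα₀ : α ∉ Δ₀) (hα₀' : -α ∉ Δ₀)
    (hB' : IsBase Δ B')
    (hpos : Δ ∩ NComb B' = ((Δ ∩ NComb B) \ {α}) ∪ {-α})
    (hP : IsBase Δ₀ P) (hP' : IsBase Δ₀ P')
    (hPpos : Δ₀ ∩ NComb P = Δ₀ ∩ NComb B)
    (hP'pos : Δ₀ ∩ NComb P' = Δ₀ ∩ NComb B') :
    P = P' := by
  have key : Δ₀ ∩ NComb B' = Δ₀ ∩ NComb B := by
    ext x
    constructor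
    · rintro ⟨hx0, hxB'⟩
      have hmem : x ∈ Δ ∩ NComb B' := ⟨hsub hx0, hxB'⟩
      rw [hpos] at hmem
      rcases hmem with ⟨⟨_, hxB⟩, _⟩ | hx
      · exact ⟨hx0, hxB⟩
      · have : x = -α := hx
        exact absurd (this ▸ hx0) hα₀'
    · rintro ⟨hx0, hxB⟩
      have hxne : x ≠ α := fun h => hα₀ (h ▸ hx0)
      have hmem : x ∈ Δ ∩ NComb B' := by
        rw [hpos]; exact Or.inl ⟨⟨hsub hx0, hxB⟩, hxne⟩
      exact ⟨hx0, hmem.2⟩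
  have hM : Δ₀ ∩ NComb P = Δ₀ ∩ NComb P' := by rw [hPpos, hP'pos, key]
  have hcl : ∀ Q : Set V, IsBase Δ₀ Q →
      AddSubmonoid.closure Q = AddSubmonoid.closure (Δ₀ ∩ NComb Q) := by
    intro Q hQ
    apply le_antisymm
    · apply AddSubmonoid.closure_mono
      exact fun x hx => ⟨hQ.1 hx, AddSubmonoid.subset_closure hx⟩
    · rw [AddSubmonoid.closure_le]
      exact fun x hx => hx.2
  have hcleq : AddSubmonoid.closure P = AddSubmonoid.closure P' := by
    rw [hcl P hP, hcl P' hP', hM]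
  exact base_eq_of_closure_eq hP.2.1 hP'.2.1
    (fun h => h0 (hsub (hP.1 h))) (fun h => h0 (hsub (hP'.1 h))) hcleq
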